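/- For complex parameters α, β, γ, let A(α,β,γ) be the 5 × 5 complex matrix whose only nonzero entries are A₀₁ = α, A₁₂ = α, A₁₃ = β, A₂₃ = γ, A₃₄ = γ, together with the conjugate entries A₁₀ = conj(α), A₂₁ = conj(α), A₃₁ = conj(β), A₃₂ = conj(γ), A₄₃ = conj(γ). Then A(α,β,γ) is Hermitian for all α, β, γ, and whenever (α,β,γ) ≠ (0,0,0), the number of strictly positive eigenvalues of A(α,β,γ) (counted with multiplicity) equals the number of strictly negative eigenvalues, and this common number is 1 or 2; in particular A(α,β,γ) has eigenvalues of both signs. -/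

import Mathlib

open Matrix

/-- The `5 × 5` Hermitian matrices arising as Levi forms in Example 1 of Section 7. -/
noncomputable def leviMatrix (α β γ : ℂ) : Matrix (Fin 5) (Fin 5) ℂ :=
  !![0, α, 0, 0, 0;
     starRingEnd ℂ α, 0, α, β, 0;
     0, starRingEnd ℂ α, 0, γ, 0;
     0, starRingEnd ℂ β, starRingEnd ℂ γ, 0, γ;
     0, 0, 0, starRingEnd ℂ γ, 0]


private lemma count4 (x y z w : ℝ) (hsum : x + y + z + w = 0) (hprod : 0 < x * y * z * w) :
    ((if 0 < x then (1:ℕ) else 0) + (if 0 < y then (1:ℕ) else 0) + (if 0 < z then (1:ℕ) else 0)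
        + (if 0 < w then (1:ℕ) else 0)) = 2 ∧
    ((if x < 0 then (1:ℕ) else 0) + (if y < 0 then (1:ℕ) else 0) + (if z < 0 then (1:ℕ) else 0)
        + (if w < 0 then (1:ℕ) else 0)) = 2 := by
  rcases lt_trichotomy x 0 with hx|hx|hx <;> rcases lt_trichotomy y 0 with hy|hy|hy <;>
    rcases lt_trichotomy z 0 with hz|hz|hz <;> rcases lt_trichotomy w 0 with hw|hw|hw <;>
    first
      | ((constructor <;>
          simp [hx, hy, hz, hw, asymm hx, asymm hy, asymm hz, asymm hw]); done)
      | (exfalso; simp_all; done)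
      | (exfalso; linarith)
      | (exfalso; nlinarith [hprod, mul_pos (mul_pos hx hy) hz])
      | (exfalso; nlinarith [hprod, mul_pos (mul_pos hx hy) hw])
      | (exfalso; nlinarith [hprod, mul_pos (mul_pos hx hz) hw])
      | (exfalso; nlinarith [hprod, mul_pos (mul_pos hy hz) hw])
      | (exfalso; nlinarith [hprod, mul_pos (mul_pos_of_neg_of_neg hx hy) hz])
      | (exfalso; nlinarith [hprod, mul_pos (mul_pos_of_neg_of_neg hx hy) hw])
      | (exfalso; nlinarith [hprod, mul_pos (mul_pos_of_neg_of_neg hx hz) hw])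
      | (exfalso; nlinarith [hprod, mul_pos (mul_pos_of_neg_of_neg hy hz) hw])
      | (exfalso; nlinarith [hprod, mul_pos (mul_pos_of_neg_of_neg hy hz) hx])
      | (exfalso; nlinarith [hprod, mul_pos (mul_pos_of_neg_of_neg hx hz) hy])

private lemma pair_case (μ : Fin 5 → ℝ) (a b : Fin 5)
    (hz : ∀ i, i ≠ a → i ≠ b → μ i = 0) (hpos : 0 < μ a) (hneg : μ b < 0) :
    (Finset.univ.filter fun i => 0 < μ i) = {a} ∧
    (Finset.univ.filter fun i => μ i < 0) = {b} := by
  constructor <;> ext i <;>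
    simp only [Finset.mem_filter, Finset.mem_univ, true_and, Finset.mem_singleton]
  · constructor
    · intro hi
      by_contra hia
      rcases eq_or_ne i b with rfl | hib
      · exact absurd hi (asymm hneg)
      · rw [hz i hia hib] at hi; exact lt_irrefl 0 hi
    · rintro rfl; exact hpos
  · constructor
    · intro hi
      by_contra hib
      rcases eq_or_ne i a with rfl | hia
      · exact absurd hi (asymm hpos)
      · rw [hz i hia hib] at hi; exact lt_irrefl 0 hi
    · rintro rfl; exact hneg

private lemma pair_count (μ : Fin 5 → ℝ) (a b : Fin 5)
    (hz : ∀ i, i ≠ a → i ≠ b → μ i = 0) (hne : μ a ≠ 0) (hba : μ b = -μ a) :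
    (Finset.univ.filter fun i => 0 < μ i).card = 1 ∧
    (Finset.univ.filter fun i => μ i < 0).card = 1 := by
  rcases hne.lt_or_gt with h | h
  · have hb : 0 < μ b := by rw [hba]; linarith
    obtain ⟨e1, e2⟩ := pair_case μ b a (fun i h1 h2 => hz i h2 h1) hb h
    rw [e1, e2]; simp
  · have hb : μ b < 0 := by rw [hba]; linarith
    obtain ⟨e1, e2⟩ := pair_case μ a b hz h hb
    rw [e1, e2]; simp


private lemma root5 (x μ0 μ1 μ2 μ3 μ4 s t k : ℝ)
    (h1 : μ0 + μ1 + μ2 + μ3 + μ4 = 0)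
    (h2 : μ0^2 + μ1^2 + μ2^2 + μ3^2 + μ4^2 = 2*s)
    (h3 : μ0^3 + μ1^3 + μ2^3 + μ3^3 + μ4^3 = 3*t)
    (h4 : μ0^4 + μ1^4 + μ2^4 + μ3^4 + μ4^4 = 2*s^2 - 4*k)
    (h5 : μ0 * μ1 * μ2 * μ3 * μ4 = 0)
    (hz5 : (x - μ0)*(x - μ1)*(x - μ2)*(x - μ3)*(x - μ4) = 0) :
    x^5 - s*x^3 - t*x^2 + k*x = 0 := by
  linear_combination hz5
    + (x^4 - (x^3/2)*(μ0 + μ1 + μ2 + μ3 + μ4)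
      + (x^2/6)*((μ0 + μ1 + μ2 + μ3 + μ4)^2 - 3*(μ0^2 + μ1^2 + μ2^2 + μ3^2 + μ4^2))
      - (x/24)*((μ0 + μ1 + μ2 + μ3 + μ4)^3
        - 6*(μ0 + μ1 + μ2 + μ3 + μ4)*(μ0^2 + μ1^2 + μ2^2 + μ3^2 + μ4^2)
        + 8*(μ0^3 + μ1^3 + μ2^3 + μ3^3 + μ4^3))) * h1
    + ((x^3)/2 - (x/24)*(3*(μ0^2 + μ1^2 + μ2^2 + μ3^2 + μ4^2) + 6*s)) * h2
    + (x^2/3) * h3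
    + (x/4) * h4
    + h5

private lemma fin5_cases : ∀ i : Fin 5, i = 0 ∨ i = 1 ∨ i = 2 ∨ i = 3 ∨ i = 4 := by decide

private lemma mainpair (μ : Fin 5 → ℝ) (s : ℝ) (hs : 0 < s) (a b : Fin 5)
    (hz : ∀ i, i ≠ a → i ≠ b → μ i = 0) (hqa : μ a ^ 2 = s) (hba : μ b = -μ a) :
    (Finset.univ.filter fun i => 0 < μ i).card = (Finset.univ.filter fun i => μ i < 0).card ∧
    ((Finset.univ.filter fun i => 0 < μ i).card = 1 ∨
      (Finset.univ.filter fun i => 0 < μ i).card = 2) := by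
  have hne : μ a ≠ 0 := by
    intro h0; rw [h0] at hqa; norm_num at hqa; exact hs.ne' hqa.symm
  obtain ⟨c1, c2⟩ := pair_count μ a b hz hne hba
  exact ⟨c1.trans c2.symm, Or.inl c1⟩

set_option maxHeartbeats 2000000 in
private lemma core (μ : Fin 5 → ℝ) (s t k : ℝ) (hs : 0 < s) (hk : 0 ≤ k) (hkt : k = 0 → t = 0)
    (h1 : μ 0 + μ 1 + μ 2 + μ 3 + μ 4 = 0)
    (h2 : μ 0^2 + μ 1^2 + μ 2^2 + μ 3^2 + μ 4^2 = 2*s)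
    (h3 : μ 0^3 + μ 1^3 + μ 2^3 + μ 3^3 + μ 4^3 = 3*t)
    (h4 : μ 0^4 + μ 1^4 + μ 2^4 + μ 3^4 + μ 4^4 = 2*s^2 - 4*k)
    (h5 : μ 0 * μ 1 * μ 2 * μ 3 * μ 4 = 0) :
    (Finset.univ.filter fun i => 0 < μ i).card = (Finset.univ.filter fun i => μ i < 0).card ∧
    ((Finset.univ.filter fun i => 0 < μ i).card = 1 ∨
      (Finset.univ.filter fun i => 0 < μ i).card = 2) ∧
    (∃ i, 0 < μ i) ∧ (∃ i, μ i < 0) := by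
  have main : (Finset.univ.filter fun i => 0 < μ i).card =
        (Finset.univ.filter fun i => μ i < 0).card ∧
      ((Finset.univ.filter fun i => 0 < μ i).card = 1 ∨
        (Finset.univ.filter fun i => 0 < μ i).card = 2) := by
    rcases eq_or_lt_of_le hk with hk0 | hkpos
    · -- k = 0, t = 0 : eigenvalues are 0,0,0,±√s
      have ht : t = 0 := hkt hk0.symm
      have hd : ∀ i : Fin 5, (μ i = 0 ∧ μ i ^ 2 = 0) ∨ μ i ^ 2 = s := by
        intro i
        have key : (μ i)^5 - s*(μ i)^3 - t*(μ i)^2 + k*(μ i) = 0 := by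
          apply root5 (μ i) (μ 0) (μ 1) (μ 2) (μ 3) (μ 4) s t k h1 h2 h3 h4 h5
          rcases fin5_cases i with rfl|rfl|rfl|rfl|rfl <;> ring
        have key2 : μ i ^ 3 * (μ i ^ 2 - s) = 0 := by
          linear_combination key + (μ i)^2 * ht + (μ i) * hk0
        rcases mul_eq_zero.mp key2 with h | h
        · have h0 := pow_eq_zero_iff (n := 3) (by norm_num) |>.mp h
          exact Or.inl ⟨h0, by rw [h0]; ring⟩
        · exact Or.inr (by linarith [sub_eq_zero.mp h])
      rcases hd 0 with ⟨z0, q0⟩ | q0 <;> rcases hd 1 with ⟨z1, q1⟩ | q1 <;>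
        rcases hd 2 with ⟨z2, q2⟩ | q2 <;> rcases hd 3 with ⟨z3, q3⟩ | q3 <;>
        rcases hd 4 with ⟨z4, q4⟩ | q4 <;>
      first
        | (exfalso; linarith)
        | (exact mainpair μ s hs 0 1
            (by intro i hi1 hi2
                rcases fin5_cases i with rfl|rfl|rfl|rfl|rfl <;>
                  first
                    | exact absurd rfl hi1 | exact absurd rfl hi2
                    | exact z0 | exact z1 | exact z2 | exact z3 | exact z4)
            q0 (by linarith))
        | (exact mainpair μ s hs 0 2
            (by intro i hi1 hi2
                rcases fin5_cases i with rfl|rfl|rfl|rfl|rfl <;>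
                  first
                    | exact absurd rfl hi1 | exact absurd rfl hi2
                    | exact z0 | exact z1 | exact z2 | exact z3 | exact z4)
            q0 (by linarith))
        | (exact mainpair μ s hs 0 3
            (by intro i hi1 hi2
                rcases fin5_cases i with rfl|rfl|rfl|rfl|rfl <;>
                  first
                    | exact absurd rfl hi1 | exact absurd rfl hi2
                    | exact z0 | exact z1 | exact z2 | exact z3 | exact z4)
            q0 (by linarith))
        | (exact mainpair μ s hs 0 4
            (by intro i hi1 hi2
                rcases fin5_cases i with rfl|rfl|rfl|rfl|rfl <;>
                  first
                    | exact absurd rfl hi1 | exact absurd rfl hi2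
                    | exact z0 | exact z1 | exact z2 | exact z3 | exact z4)
            q0 (by linarith))
        | (exact mainpair μ s hs 1 2
            (by intro i hi1 hi2
                rcases fin5_cases i with rfl|rfl|rfl|rfl|rfl <;>
                  first
                    | exact absurd rfl hi1 | exact absurd rfl hi2
                    | exact z0 | exact z1 | exact z2 | exact z3 | exact z4)
            q1 (by linarith))
        | (exact mainpair μ s hs 1 3
            (by intro i hi1 hi2
                rcases fin5_cases i with rfl|rfl|rfl|rfl|rfl <;>
                  first
                    | exact absurd rfl hi1 | exact absurd rfl hi2
                    | exact z0 | exact z1 | exact z2 | exact z3 | exact z4)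
            q1 (by linarith))
        | (exact mainpair μ s hs 1 4
            (by intro i hi1 hi2
                rcases fin5_cases i with rfl|rfl|rfl|rfl|rfl <;>
                  first
                    | exact absurd rfl hi1 | exact absurd rfl hi2
                    | exact z0 | exact z1 | exact z2 | exact z3 | exact z4)
            q1 (by linarith))
        | (exact mainpair μ s hs 2 3
            (by intro i hi1 hi2
                rcases fin5_cases i with rfl|rfl|rfl|rfl|rfl <;>
                  first
                    | exact absurd rfl hi1 | exact absurd rfl hi2
                    | exact z0 | exact z1 | exact z2 | exact z3 | exact z4)
            q2 (by linarith))
        | (exact mainpair μ s hs 2 4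
            (by intro i hi1 hi2
                rcases fin5_cases i with rfl|rfl|rfl|rfl|rfl <;>
                  first
                    | exact absurd rfl hi1 | exact absurd rfl hi2
                    | exact z0 | exact z1 | exact z2 | exact z3 | exact z4)
            q2 (by linarith))
        | (exact mainpair μ s hs 3 4
            (by intro i hi1 hi2
                rcases fin5_cases i with rfl|rfl|rfl|rfl|rfl <;>
                  first
                    | exact absurd rfl hi1 | exact absurd rfl hi2
                    | exact z0 | exact z1 | exact z2 | exact z3 | exact z4)
            q3 (by linarith))
    · -- k > 0
      have hE4 : μ 1*μ 2*μ 3*μ 4 + μ 0*μ 2*μ 3*μ 4 + μ 0*μ 1*μ 3*μ 4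
          + μ 0*μ 1*μ 2*μ 4 + μ 0*μ 1*μ 2*μ 3 = k := by
        linear_combination (1/24) * (((μ 0 + μ 1 + μ 2 + μ 3 + μ 4)^3
              - 6*(μ 0 + μ 1 + μ 2 + μ 3 + μ 4)*(μ 0^2 + μ 1^2 + μ 2^2 + μ 3^2 + μ 4^2)
              + 8*(μ 0^3 + μ 1^3 + μ 2^3 + μ 3^3 + μ 4^3)) * h1
            + (3*(μ 0^2 + μ 1^2 + μ 2^2 + μ 3^2 + μ 4^2) + 6*s) * h2
            - 6 * h4)
      have hor : μ 0 = 0 ∨ μ 1 = 0 ∨ μ 2 = 0 ∨ μ 3 = 0 ∨ μ 4 = 0 := by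
        simpa [mul_eq_zero, or_assoc] using h5
      have hcp : (Finset.univ.filter fun i => 0 < μ i).card
          = ((if 0 < μ 0 then (1:ℕ) else 0) + (if 0 < μ 1 then (1:ℕ) else 0)
            + (if 0 < μ 2 then (1:ℕ) else 0) + (if 0 < μ 3 then (1:ℕ) else 0)
            + (if 0 < μ 4 then (1:ℕ) else 0)) := by
        rw [← Nat.cast_id (Finset.univ.filter fun i => 0 < μ i).card,
          Finset.natCast_card_filter, Fin.sum_univ_five]
      have hcn : (Finset.univ.filter fun i => μ i < 0).card
          = ((if μ 0 < 0 then (1:ℕ) else 0) + (if μ 1 < 0 then (1:ℕ) else 0)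
            + (if μ 2 < 0 then (1:ℕ) else 0) + (if μ 3 < 0 then (1:ℕ) else 0)
            + (if μ 4 < 0 then (1:ℕ) else 0)) := by
        rw [← Nat.cast_id (Finset.univ.filter fun i => μ i < 0).card,
          Finset.natCast_card_filter, Fin.sum_univ_five]
      rw [hcp, hcn]
      rcases hor with hz0 | hz0 | hz0 | hz0 | hz0
      · have he : μ 1*μ 2*μ 3*μ 4 = k := by
          linear_combination hE4 - (μ 2*μ 3*μ 4 + μ 1*μ 3*μ 4 + μ 1*μ 2*μ 4 + μ 1*μ 2*μ 3) * hz0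
        have hp : 0 < μ 1*μ 2*μ 3*μ 4 := by rw [he]; exact hkpos
        obtain ⟨c1, c2⟩ := count4 (μ 1) (μ 2) (μ 3) (μ 4) (by linarith) hp
        rw [hz0]
        simp only [lt_self_iff_false, if_false, add_zero, zero_add]
        exact ⟨c1.trans c2.symm, Or.inr c1⟩
      · have he : μ 0*μ 2*μ 3*μ 4 = k := by
          linear_combination hE4 - (μ 2*μ 3*μ 4 + μ 0*μ 3*μ 4 + μ 0*μ 2*μ 4 + μ 0*μ 2*μ 3) * hz0
        have hp : 0 < μ 0*μ 2*μ 3*μ 4 := by rw [he]; exact hkpos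
        obtain ⟨c1, c2⟩ := count4 (μ 0) (μ 2) (μ 3) (μ 4) (by linarith) hp
        rw [hz0]
        simp only [lt_self_iff_false, if_false, add_zero, zero_add]
        exact ⟨c1.trans c2.symm, Or.inr c1⟩
      · have he : μ 0*μ 1*μ 3*μ 4 = k := by
          linear_combination hE4 - (μ 1*μ 3*μ 4 + μ 0*μ 3*μ 4 + μ 0*μ 1*μ 4 + μ 0*μ 1*μ 3) * hz0
        have hp : 0 < μ 0*μ 1*μ 3*μ 4 := by rw [he]; exact hkpos
        obtain ⟨c1, c2⟩ := count4 (μ 0) (μ 1) (μ 3) (μ 4) (by linarith) hp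
        rw [hz0]
        simp only [lt_self_iff_false, if_false, add_zero, zero_add]
        exact ⟨c1.trans c2.symm, Or.inr c1⟩
      · have he : μ 0*μ 1*μ 2*μ 4 = k := by
          linear_combination hE4 - (μ 1*μ 2*μ 4 + μ 0*μ 2*μ 4 + μ 0*μ 1*μ 4 + μ 0*μ 1*μ 2) * hz0
        have hp : 0 < μ 0*μ 1*μ 2*μ 4 := by rw [he]; exact hkpos
        obtain ⟨c1, c2⟩ := count4 (μ 0) (μ 1) (μ 2) (μ 4) (by linarith) hp
        rw [hz0]
        simp only [lt_self_iff_false, if_false, add_zero, zero_add]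
        exact ⟨c1.trans c2.symm, Or.inr c1⟩
      · have he : μ 0*μ 1*μ 2*μ 3 = k := by
          linear_combination hE4 - (μ 1*μ 2*μ 3 + μ 0*μ 2*μ 3 + μ 0*μ 1*μ 3 + μ 0*μ 1*μ 2) * hz0
        have hp : 0 < μ 0*μ 1*μ 2*μ 3 := by rw [he]; exact hkpos
        obtain ⟨c1, c2⟩ := count4 (μ 0) (μ 1) (μ 2) (μ 3) (by linarith) hp
        rw [hz0]
        simp only [lt_self_iff_false, if_false, add_zero, zero_add]
        exact ⟨c1.trans c2.symm, Or.inr c1⟩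
  obtain ⟨hEq, hOr⟩ := main
  refine ⟨hEq, hOr, ?_, ?_⟩
  · have hpos : 0 < (Finset.univ.filter fun i => 0 < μ i).card := by
      rcases hOr with h | h <;> rw [h] <;> norm_num
    obtain ⟨i, hi⟩ := Finset.card_pos.mp hpos
    exact ⟨i, (Finset.mem_filter.mp hi).2⟩
  · have hneg : 0 < (Finset.univ.filter fun i => μ i < 0).card := by
      rw [← hEq]; rcases hOr with h | h <;> rw [h] <;> norm_num
    obtain ⟨i, hi⟩ := Finset.card_pos.mp hneg
    exact ⟨i, (Finset.mem_filter.mp hi).2⟩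

private lemma trace_pow_eq {A : Matrix (Fin 5) (Fin 5) ℂ} (hA : A.IsHermitian) (m : ℕ) :
    (A ^ m).trace = ∑ i, ((hA.eigenvalues i : ℝ) : ℂ) ^ m := by
  have hsp : star (hA.eigenvectorUnitary : Matrix (Fin 5) (Fin 5) ℂ) * A *
      (hA.eigenvectorUnitary : Matrix (Fin 5) (Fin 5) ℂ) =
      Matrix.diagonal (RCLike.ofReal ∘ hA.eigenvalues) := by
    rw [← hA.conjStarAlgAut_star_eigenvectorUnitary, Unitary.conjStarAlgAut_star_apply]
  set u : Matrix (Fin 5) (Fin 5) ℂ :=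
    (Matrix.IsHermitian.eigenvectorUnitary hA : Matrix (Fin 5) (Fin 5) ℂ) with hu
  have h1 : star u * u = 1 :=
    Matrix.mem_unitaryGroup_iff'.mp (Matrix.IsHermitian.eigenvectorUnitary hA).2
  have h2 : u * star u = 1 :=
    Matrix.mem_unitaryGroup_iff.mp (Matrix.IsHermitian.eigenvectorUnitary hA).2
  have key : ∀ k : ℕ,
      (Matrix.diagonal (RCLike.ofReal ∘ hA.eigenvalues) : Matrix (Fin 5) (Fin 5) ℂ) ^ k
        = star u * A ^ k * u := by
    intro k; induction k with
    | zero => simp [h1]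
    | succ k ih =>
        rw [pow_succ, ih, ← hsp, pow_succ]
        rw [show star u * A ^ k * u * (star u * A * u)
            = star u * A ^ k * (u * star u) * A * u by noncomm_ring]
        rw [h2, mul_one, mul_assoc _ (A ^ k) A]
  have tr : (A ^ m).trace
      = ((Matrix.diagonal (RCLike.ofReal ∘ hA.eigenvalues) : Matrix (Fin 5) (Fin 5) ℂ) ^ m).trace := by
    rw [key m, Matrix.trace_mul_cycle, h2, one_mul]
  rw [tr, Matrix.diagonal_pow, Matrix.trace_diagonal]
  simp

private lemma levi_hermitian (α β γ : ℂ) : (leviMatrix α β γ).IsHermitian := by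
  ext i j
  fin_cases i <;> fin_cases j <;>
    simp [leviMatrix, Matrix.conjTranspose_apply, Matrix.vecHead, Matrix.vecTail]

private lemma levi_det (α β γ : ℂ) : (leviMatrix α β γ).det = 0 := by
  rcases eq_or_ne α 0 with rfl | ha
  · apply Matrix.det_eq_zero_of_column_eq_zero 0
    intro i; fin_cases i <;> simp [leviMatrix, Matrix.vecHead, Matrix.vecTail]
  rcases eq_or_ne γ 0 with rfl | hg
  · apply Matrix.det_eq_zero_of_column_eq_zero 4
    intro i; fin_cases i <;> simp [leviMatrix, Matrix.vecHead, Matrix.vecTail]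
  · rw [← Matrix.exists_mulVec_eq_zero_iff]
    refine ⟨![-(α*γ), 0, starRingEnd ℂ α * γ, 0, -(starRingEnd ℂ α * starRingEnd ℂ γ)], ?_, ?_⟩
    · intro h
      have h2 := congrFun h 2
      simp only [Matrix.cons_val_two, Matrix.tail_cons, Matrix.head_cons, Pi.zero_apply] at h2
      exact (mul_ne_zero (by simpa using ha) hg) h2
    · funext i
      fin_cases i <;>
        simp [leviMatrix, Matrix.mulVec, dotProduct, Fin.sum_univ_five,
          Matrix.vecHead, Matrix.vecTail] <;> ring

private lemma levi_trace1 (α β γ : ℂ) : (leviMatrix α β γ).trace = ((0 : ℝ) : ℂ) := by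
  simp [Matrix.trace, Matrix.diag, leviMatrix, Fin.sum_univ_five,
    Matrix.vecHead, Matrix.vecTail]

private lemma levi_trace2 (α β γ : ℂ) :
    (leviMatrix α β γ * leviMatrix α β γ).trace
      = ((2*(2*Complex.normSq α + Complex.normSq β + 2*Complex.normSq γ) : ℝ) : ℂ) := by
  have hns : ∀ z : ℂ, ((Complex.normSq z : ℝ) : ℂ) = z * starRingEnd ℂ z := fun z =>
    (Complex.mul_conj z).symm
  push_cast [hns]
  simp [Matrix.trace, Matrix.diag, Matrix.mul_apply, Fin.sum_univ_five, leviMatrix,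
    Matrix.vecHead, Matrix.vecTail]
  ring

private lemma levi_trace3 (α β γ : ℂ) :
    (leviMatrix α β γ * leviMatrix α β γ * leviMatrix α β γ).trace
      = ((3*(2*(starRingEnd ℂ α * β * starRingEnd ℂ γ).re) : ℝ) : ℂ) := by
  have h : ((((starRingEnd ℂ α * β * starRingEnd ℂ γ).re : ℝ)*2 : ℝ) : ℂ)
      = starRingEnd ℂ α * β * starRingEnd ℂ γ + α * starRingEnd ℂ β * γ := by
    rw [show (α : ℂ) * starRingEnd ℂ β * γ
        = starRingEnd ℂ (starRingEnd ℂ α * β * starRingEnd ℂ γ) by simp,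
      Complex.add_conj]
    push_cast; ring
  push_cast
  rw [show ((3:ℂ)*(2*((starRingEnd ℂ α * β * starRingEnd ℂ γ).re:ℂ)))
      = 3*(((starRingEnd ℂ α * β * starRingEnd ℂ γ).re:ℂ)*2) by ring]
  rw [show (((starRingEnd ℂ α * β * starRingEnd ℂ γ).re : ℂ)*2)
      = ((((starRingEnd ℂ α * β * starRingEnd ℂ γ).re : ℝ)*2 : ℝ) : ℂ) by push_cast; ring]
  rw [h]
  simp [Matrix.trace, Matrix.diag, Matrix.mul_apply, Fin.sum_univ_five, leviMatrix,
    Matrix.vecHead, Matrix.vecTail]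
  ring

private lemma levi_trace4 (α β γ : ℂ) :
    (leviMatrix α β γ * leviMatrix α β γ * (leviMatrix α β γ * leviMatrix α β γ)).trace
      = ((2*(2*Complex.normSq α + Complex.normSq β + 2*Complex.normSq γ)^2
          - 4*(3*(Complex.normSq α * Complex.normSq γ)) : ℝ) : ℂ) := by
  have hns : ∀ z : ℂ, ((Complex.normSq z : ℝ) : ℂ) = z * starRingEnd ℂ z := fun z =>
    (Complex.mul_conj z).symm
  push_cast [hns]
  simp [Matrix.trace, Matrix.diag, Matrix.mul_apply, Fin.sum_univ_five, leviMatrix,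
    Matrix.vecHead, Matrix.vecTail]
  ring


set_option maxRecDepth 8000 in
/-- `leviMatrix α β γ` is Hermitian for all `α, β, γ`, and whenever
`(α, β, γ) ≠ (0, 0, 0)`, the number of strictly positive eigenvalues (with multiplicity)
equals the number of strictly negative eigenvalues, this common number is `1` or `2`,
and in particular there are eigenvalues of both signs. -/
theorem leviMatrix_signature (α β γ : ℂ) :
    ∃ hA : (leviMatrix α β γ).IsHermitian,
      ((α, β, γ) ≠ (0, 0, 0) →
        (Finset.univ.filter fun i => 0 < hA.eigenvalues i).card =
            (Finset.univ.filter fun i => hA.eigenvalues i < 0).card ∧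
        ((Finset.univ.filter fun i => 0 < hA.eigenvalues i).card = 1 ∨
          (Finset.univ.filter fun i => 0 < hA.eigenvalues i).card = 2) ∧
        (∃ i, 0 < hA.eigenvalues i) ∧ (∃ i, hA.eigenvalues i < 0)) := by
  have hHerm := levi_hermitian α β γ
  refine ⟨hHerm, fun hne => ?_⟩
  set A := leviMatrix α β γ with hA
  set μ : Fin 5 → ℝ := hHerm.eigenvalues with hμ
  set s : ℝ := 2*Complex.normSq α + Complex.normSq β + 2*Complex.normSq γ with hsdef
  set t : ℝ := 2*(starRingEnd ℂ α * β * starRingEnd ℂ γ).re with htdef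
  set k : ℝ := 3*(Complex.normSq α * Complex.normSq γ) with hkdef
  have hsum : ∀ (m : ℕ) (r : ℝ), (A ^ m).trace = (r : ℂ) →
      μ 0 ^ m + μ 1 ^ m + μ 2 ^ m + μ 3 ^ m + μ 4 ^ m = r := by
    intro m r h
    have h2 := (trace_pow_eq hHerm m).symm.trans h
    rw [Fin.sum_univ_five] at h2
    exact_mod_cast h2
  have h1 : μ 0 + μ 1 + μ 2 + μ 3 + μ 4 = 0 := by
    have := hsum 1 0 (by rw [pow_one]; exact levi_trace1 α β γ)
    simpa using this
  have h2 : μ 0^2 + μ 1^2 + μ 2^2 + μ 3^2 + μ 4^2 = 2*s := by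
    exact hsum 2 (2*s) (by rw [pow_two]; exact levi_trace2 α β γ)
  have h3 : μ 0^3 + μ 1^3 + μ 2^3 + μ 3^3 + μ 4^3 = 3*t := by
    refine hsum 3 (3*t) ?_
    rw [show (3:ℕ) = 2 + 1 from rfl, pow_add, pow_two, pow_one]
    exact levi_trace3 α β γ
  have h4 : μ 0^4 + μ 1^4 + μ 2^4 + μ 3^4 + μ 4^4 = 2*s^2 - 4*k := by
    refine hsum 4 (2*s^2 - 4*k) ?_
    rw [show (4:ℕ) = 2 + 2 from rfl, pow_add, pow_two]
    rw [hsdef, hkdef]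
    exact levi_trace4 α β γ
  have h5 : μ 0 * μ 1 * μ 2 * μ 3 * μ 4 = 0 := by
    have hd := hHerm.det_eq_prod_eigenvalues
    rw [Fin.prod_univ_five] at hd
    have hd0 : A.det = 0 := by rw [hA]; exact levi_det α β γ
    rw [hd0] at hd
    have h0 := hd.symm
    rw [hμ]
    exact RCLike.ofReal_eq_zero.mp (by exact_mod_cast h0)
  have hk : 0 ≤ k := by
    have := mul_nonneg (Complex.normSq_nonneg α) (Complex.normSq_nonneg γ)
    rw [hkdef]; linarith
  have hkt : k = 0 → t = 0 := by
    intro hk0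
    rw [hkdef] at hk0
    have : Complex.normSq α = 0 ∨ Complex.normSq γ = 0 := by
      rcases mul_eq_zero.mp (by linarith : Complex.normSq α * Complex.normSq γ = 0) with h | h
      · exact Or.inl h
      · exact Or.inr h
    rcases this with h | h
    · have : α = 0 := Complex.normSq_eq_zero.mp h
      rw [htdef, this]; simp
    · have : γ = 0 := Complex.normSq_eq_zero.mp h
      rw [htdef, this]; simp
  have hs : 0 < s := by
    have hone : α ≠ 0 ∨ β ≠ 0 ∨ γ ≠ 0 := by
      by_contra hcon
      push_neg at hcon
      exact hne (by rw [hcon.1, hcon.2.1, hcon.2.2])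
    have na := Complex.normSq_nonneg α
    have nb := Complex.normSq_nonneg β
    have nc := Complex.normSq_nonneg γ
    rw [hsdef]
    rcases hone with h | h | h
    · have := Complex.normSq_pos.mpr h; linarith
    · have := Complex.normSq_pos.mpr h; linarith
    · have := Complex.normSq_pos.mpr h; linarith
  exact core μ s t k hs hk hkt h1 h2 h3 h4 h5
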